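/- Let r₀ > 1 be odd, ω ∈ ℂ a primitive r₀-th root of unity, and s₀ the multiplicative order of 2 modulo r₀. If s₀ is even then T(2^{s₀}; ω) is real, and if s₀ is odd then T(2^{s₀}; ω) is purely imaginary (its real part is zero). -/

import Mathlib

open Finset

/-- The Thue–Morse sequence: `t n = (-1)^(binary digit sum of n)`,
so `t 0 = 1`, `t (2n) = t n`, `t (2n+1) = -t n`. -/
def thueMorse (n : ℕ) : ℤ := (-1) ^ (Nat.digits 2 n).sum

/-- Evaluation of the Thue–Morse polynomial: `T(n; z) = ∑_{m=0}^{n-1} t(m) z^m ∈ ℂ`. -/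
noncomputable def tmEval (n : ℕ) (z : ℂ) : ℂ :=
  ∑ m ∈ Finset.range n, (thueMorse m : ℂ) * z ^ m

lemma thueMorse_two_mul (n : ℕ) : thueMorse (2 * n) = thueMorse n := by
  rcases Nat.eq_zero_or_pos n with h | h
  · simp [h]
  · unfold thueMorse
    rw [Nat.digits_def' (by norm_num) (by omega)]
    simp [Nat.mul_div_cancel_left, Nat.mul_mod_right]

lemma thueMorse_two_mul_add_one (n : ℕ) : thueMorse (2 * n + 1) = -thueMorse n := by
  unfold thueMorse
  rw [Nat.digits_def' (by norm_num) (by omega)]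
  have h1 : (2 * n + 1) % 2 = 1 := by omega
  have h2 : (2 * n + 1) / 2 = n := by omega
  rw [h1, h2]
  simp [pow_succ]
  ring

lemma tmEval_two_mul (n : ℕ) (z : ℂ) : tmEval (2 * n) z = (1 - z) * tmEval n (z ^ 2) := by
  induction n with
  | zero => simp [tmEval]
  | succ n ih =>
      have : 2 * (n + 1) = (2 * n + 1) + 1 := by ring
      rw [this]
      unfold tmEval at *
      rw [Finset.sum_range_succ, Finset.sum_range_succ, Finset.sum_range_succ, ih,
        thueMorse_two_mul, thueMorse_two_mul_add_one]
      push_cast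
      ring

lemma tmEval_prod (s : ℕ) : ∀ z : ℂ, tmEval (2 ^ s) z = ∏ i ∈ range s, (1 - z ^ 2 ^ i) := by
  induction s with
  | zero => intro z; simp [tmEval, thueMorse]
  | succ s ih =>
      intro z
      have : (2 : ℕ) ^ (s + 1) = 2 * 2 ^ s := by ring
      rw [this, tmEval_two_mul, ih (z ^ 2), Finset.prod_range_succ', pow_zero, pow_one,
        mul_comm]
      congr 1
      exact Finset.prod_congr rfl fun i _ => by rw [← pow_mul, ← pow_succ']

theorem tmEval_real_or_imaginary (r₀ : ℕ) (hr₀ : 1 < r₀) (hodd : Odd r₀) (ω : ℂ)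
    (hω : IsPrimitiveRoot ω r₀) (s₀ : ℕ) (hs₀ : s₀ = orderOf (2 : ZMod r₀)) :
    (Even s₀ → (tmEval (2 ^ s₀) ω).im = 0) ∧ (Odd s₀ → (tmEval (2 ^ s₀) ω).re = 0) := by
  have hω1 : ω ^ r₀ = 1 := hω.pow_eq_one
  have hωne : ω ≠ 0 := hω.ne_zero (by omega)
  have habs : ‖ω‖ = 1 := Complex.norm_eq_one_of_pow_eq_one hω1 (by omega)
  have hconj : (starRingEnd ℂ) ω = ω⁻¹ := (Complex.inv_eq_conj habs).symm
  -- 2^s₀ ≡ 1 mod r₀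
  have hdvd : r₀ ∣ 2 ^ s₀ - 1 := by
    have h2 : ((2 : ℕ) : ZMod r₀) ^ s₀ = 1 := by
      have : (2 : ZMod r₀) ^ s₀ = 1 := by rw [hs₀]; exact pow_orderOf_eq_one _
      simpa using this
    have : ((2 ^ s₀ : ℕ) : ZMod r₀) = ((1 : ℕ) : ZMod r₀) := by push_cast; simpa using h2
    have := (ZMod.natCast_eq_natCast_iff _ _ _).mp this
    exact (Nat.modEq_iff_dvd' (Nat.one_le_two_pow)).mp this.symm
  have hpow1 : ω ^ (2 ^ s₀ - 1) = 1 := by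
    obtain ⟨k, hk⟩ := hdvd
    rw [hk, pow_mul, hω1, one_pow]
  -- each factor's base is nonzero
  have hbne : ∀ i : ℕ, ω ^ 2 ^ i ≠ 0 := fun i => pow_ne_zero _ hωne
  set T := tmEval (2 ^ s₀) ω with hT
  have key : (starRingEnd ℂ) T = (-1) ^ s₀ * T := by
    rw [hT, tmEval_prod, map_prod]
    have step : ∀ i ∈ range s₀, (starRingEnd ℂ) (1 - ω ^ 2 ^ i) =
        (-(ω ^ 2 ^ i)⁻¹) * (1 - ω ^ 2 ^ i) := by
      intro i _
      rw [map_sub, map_one, map_pow, hconj, ← inv_pow]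
      rw [neg_mul, mul_sub, mul_one, ← mul_pow, inv_mul_cancel₀ hωne, one_pow]
      ring
    rw [Finset.prod_congr rfl step, Finset.prod_mul_distrib]
    have hprod : ∏ i ∈ range s₀, ω ^ 2 ^ i = 1 := by
      rw [Finset.prod_pow_eq_pow_sum]
      have hsum : ∑ i ∈ range s₀, 2 ^ i = 2 ^ s₀ - 1 := by
        rw [Nat.geomSum_eq le_rfl]
        simp
      rw [hsum, hpow1]
    have h1 : ∏ i ∈ range s₀, -(ω ^ 2 ^ i)⁻¹ = (-1) ^ s₀ := by
      rw [Finset.prod_congr rfl (fun i (_ : i ∈ range s₀) =>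
        (neg_eq_neg_one_mul ((ω ^ 2 ^ i)⁻¹))), Finset.prod_mul_distrib, Finset.prod_const, Finset.card_range,
        Finset.prod_inv_distrib, hprod, inv_one, mul_one]
    rw [h1]
  constructor
  · intro he
    have : (starRingEnd ℂ) T = T := by rw [key, he.neg_one_pow, one_mul]
    exact (Complex.conj_eq_iff_im.mp this)
  · intro ho
    have h1 : (starRingEnd ℂ) T = -T := by rw [key, ho.neg_one_pow, neg_one_mul]
    have h2 := Complex.add_conj T
    rw [h1, add_neg_cancel] at h2
    have : (2 : ℝ) * T.re = 0 := by exact_mod_cast h2.symm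
    linarith
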